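/- Let X, Y be real Banach spaces, U ⊆ X open, f : U → Y a continuous map, and Jf a pseudo-Jacobian mapping for f on U satisfying the chain rule condition. Suppose α := inf{ν(T) : T ∈ co Jf(x) for some x ∈ U} > 0, where ν(T) is the surjectivity index of T. Then for each open ball B(x₀, δ) ⊆ U one has B(f(x₀), δα) ⊆ f(B(x₀, δ)); consequently f(U) is open in Y and f is an open map from U onto f(U). -/

import Mathlib

open Filter Topology Metric Set Bornology

noncomputable section

/-- Upper right-hand Dini directional derivative of `φ` at `x` in direction `v`. -/
def diniUpper {X : Type*} [NormedAddCommGroup X] [NormedSpace ℝ X]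
    (φ : X → ℝ) (x v : X) : ℝ :=
  Filter.limsup (fun t : ℝ => (φ (x + t • v) - φ x) / t) (𝓝[>] (0 : ℝ))

/-- `J` is a pseudo-Jacobian of `f` at `x`: `J` is a nonempty set of bounded linear
operators such that for every continuous linear functional `p` on `Y` and every
direction `v`, the upper Dini derivative of `p ∘ f` at `x` in direction `v` is bounded
by `sup {p (T v) : T ∈ J}`. -/
def IsPseudoJacobianAt {X Y : Type*} [NormedAddCommGroup X] [NormedSpace ℝ X]
    [NormedAddCommGroup Y] [NormedSpace ℝ Y]
    (f : X → Y) (J : Set (X →L[ℝ] Y)) (x : X) : Prop :=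
  J.Nonempty ∧ ∀ (p : Y →L[ℝ] ℝ) (v : X),
    diniUpper (fun z => p (f z)) x v ≤ sSup ((fun T : X →L[ℝ] Y => p (T v)) '' J)


/-- Clarke generalized directional derivative of `φ` at `y` in direction `w`:
`limsup_{z → y, t → 0⁺} (φ (z + t w) − φ z)/t`. -/
def clarkeDirDeriv {Y : Type*} [NormedAddCommGroup Y] [NormedSpace ℝ Y]
    (φ : Y → ℝ) (y w : Y) : ℝ :=
  Filter.limsup (fun q : Y × ℝ => (φ (q.1 + q.2 • w) - φ q.1) / q.2)
    ((𝓝 y) ×ˢ (𝓝[>] (0 : ℝ)))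

/-- Clarke subdifferential of `φ` at `y`. -/
def clarkeSubdiff {Y : Type*} [NormedAddCommGroup Y] [NormedSpace ℝ Y]
    (φ : Y → ℝ) (y : Y) : Set (Y →L[ℝ] ℝ) :=
  {p | ∀ w : Y, p w ≤ clarkeDirDeriv φ y w}

/-- The set `A_{x,y}(f) = ∂‖·‖(f x − y) ∘ co (Jf x) ⊆ X*`. -/
def pjComp {X Y : Type*} [NormedAddCommGroup X] [NormedSpace ℝ X]
    [NormedAddCommGroup Y] [NormedSpace ℝ Y]
    (f : X → Y) (Jf : X → Set (X →L[ℝ] Y)) (x : X) (y : Y) : Set (X →L[ℝ] ℝ) :=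
  {S | ∃ p ∈ clarkeSubdiff (fun w : Y => ‖w‖) (f x - y),
       ∃ T ∈ convexHull ℝ (Jf x), S = p.comp T}

/-- The pseudo-Jacobian mapping `Jf` satisfies the chain rule condition on `U`:
for every `x ∈ U` and every `y ≠ f x`, the set `A_{x,y}(f)` is weak-star closed,
convex, and is a pseudo-Jacobian at `x` of the function `z ↦ ‖f z − y‖`. -/
def ChainRuleCond {X Y : Type*} [NormedAddCommGroup X] [NormedSpace ℝ X]
    [NormedAddCommGroup Y] [NormedSpace ℝ Y]
    (f : X → Y) (Jf : X → Set (X →L[ℝ] Y)) (U : Set X) : Prop :=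
  ∀ x ∈ U, ∀ y : Y, y ≠ f x →
    IsClosed ((StrongDual.toWeakDual : (X →L[ℝ] ℝ) → WeakDual ℝ X) ''
        pjComp f Jf x y) ∧
    Convex ℝ (pjComp f Jf x y) ∧
    IsPseudoJacobianAt (fun z : X => ‖f z - y‖) (pjComp f Jf x y) x

/-- The surjectivity index `ν(T)` of a bounded linear operator `T : X → Y`: the co-norm
of the adjoint operator `T* : Y* → X*`, i.e. `inf {‖y* ∘ T‖ : ‖y*‖ = 1}`. -/
def nuIndex {X Y : Type*} [NormedAddCommGroup X] [NormedSpace ℝ X]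
    [NormedAddCommGroup Y] [NormedSpace ℝ Y] (T : X →L[ℝ] Y) : ℝ :=
  sInf {c : ℝ | ∃ p : Y →L[ℝ] ℝ, ‖p‖ = 1 ∧ c = ‖p.comp T‖}


/-! ### Auxiliary lemmas -/

section Aux

set_option synthInstance.maxHeartbeats 1000000
set_option maxHeartbeats 1000000

lemma real_limsup_le {β : Type*} {l : Filter β} [l.NeBot] {u : β → ℝ} {a b : ℝ}
    (hb : ∀ᶠ x in l, b ≤ u x) (h : ∀ᶠ x in l, u x ≤ a) : Filter.limsup u l ≤ a := by
  rw [Filter.limsup_eq]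
  exact csInf_le ⟨b, fun a' ha' => by
    obtain ⟨x, hx1, hx2⟩ := (hb.and ha').exists
    linarith⟩ h

lemma real_limsup_ge {β : Type*} {l : Filter β} [l.NeBot] {u : β → ℝ} {c : ℝ}
    (hc : c ≤ 0) (h : ∀ᶠ x in l, c ≤ u x) : c ≤ Filter.limsup u l := by
  rw [Filter.limsup_eq]
  rcases Set.eq_empty_or_nonempty {a | ∀ᶠ n in l, u n ≤ a} with he | hne
  · rw [he, Real.sInf_empty]; exact hc
  · exact le_csInf hne (fun a' ha' => by
      obtain ⟨x, hx1, hx2⟩ := (h.and ha').exists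
      linarith)

lemma diniUpper_ge {X : Type*} [NormedAddCommGroup X] [NormedSpace ℝ X]
    {φ : X → ℝ} {x v : X} {c : ℝ} (hc : c ≤ 0)
    (h : ∀ᶠ t in 𝓝[>] (0:ℝ), c ≤ (φ (x + t • v) - φ x) / t) : c ≤ diniUpper φ x v :=
  real_limsup_ge hc h

section Clarke

variable {Y : Type*} [NormedAddCommGroup Y] [NormedSpace ℝ Y]

omit [NormedSpace ℝ Y] in
lemma eventually_pos_prod (y : Y) :
    ∀ᶠ q : Y × ℝ in (𝓝 y) ×ˢ (𝓝[>] (0 : ℝ)), 0 < q.2 := by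
  filter_upwards [Filter.prod_mem_prod (univ_mem) (self_mem_nhdsWithin)] with q hq
  exact hq.2

lemma norm_quot_lower (w : Y) {q : Y × ℝ} (hq : 0 < q.2) :
    -‖w‖ ≤ (‖q.1 + q.2 • w‖ - ‖q.1‖) / q.2 := by
  have h3 : ‖q.1‖ - q.2 * ‖w‖ ≤ ‖q.1 + q.2 • w‖ := by
    have := norm_add_le (q.1 + q.2 • w) (-(q.2 • w))
    simp only [add_neg_cancel_right] at this
    rw [norm_neg, norm_smul, Real.norm_of_nonneg hq.le] at this
    linarith
  rw [le_div_iff₀ hq]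
  linarith

lemma clarke_norm_le (y w : Y) : clarkeDirDeriv (fun w : Y => ‖w‖) y w ≤ ‖w‖ := by
  apply real_limsup_le (b := -‖w‖)
  · filter_upwards [eventually_pos_prod y] with q hq
    exact norm_quot_lower w hq
  · filter_upwards [eventually_pos_prod y] with q hq
    have h1 : ‖q.1 + q.2 • w‖ ≤ ‖q.1‖ + q.2 * ‖w‖ := by
      calc ‖q.1 + q.2 • w‖ ≤ ‖q.1‖ + ‖q.2 • w‖ := norm_add_le _ _
      _ = ‖q.1‖ + q.2 * ‖w‖ := by rw [norm_smul, Real.norm_of_nonneg hq.le]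
    rw [div_le_iff₀ hq]
    linarith

lemma clarke_norm_neg_self (u : Y) :
    clarkeDirDeriv (fun w : Y => ‖w‖) u (-u) ≤ -‖u‖ := by
  apply le_of_forall_pos_le_add
  intro ε hε
  apply real_limsup_le (b := -‖(-u)‖)
  · filter_upwards [eventually_pos_prod u] with q hq
    exact norm_quot_lower (-u) hq
  · have hball : Metric.ball u (ε/2) ×ˢ Ioo (0:ℝ) 1 ∈ (𝓝 u) ×ˢ (𝓝[>] (0:ℝ)) :=
      Filter.prod_mem_prod (Metric.ball_mem_nhds u (by linarith))
        (Ioo_mem_nhdsGT_of_mem ⟨le_refl 0, one_pos⟩)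
    filter_upwards [hball] with q hq
    have hz := hq.1
    have ht0 := hq.2.1
    have ht1 := hq.2.2
    have hrw : q.1 + q.2 • (-u) = (1 - q.2) • q.1 + q.2 • (q.1 - u) := by
      module
    have hnorm : ‖q.1 + q.2 • (-u)‖ ≤ (1 - q.2) * ‖q.1‖ + q.2 * ‖q.1 - u‖ := by
      rw [hrw]
      calc ‖(1 - q.2) • q.1 + q.2 • (q.1 - u)‖ ≤ ‖(1 - q.2) • q.1‖ + ‖q.2 • (q.1 - u)‖ :=
            norm_add_le _ _
        _ = (1 - q.2) * ‖q.1‖ + q.2 * ‖q.1 - u‖ := by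
            rw [norm_smul, norm_smul, Real.norm_of_nonneg (by linarith),
              Real.norm_of_nonneg ht0.le]
    have hzu : ‖q.1 - u‖ < ε/2 := by rwa [← dist_eq_norm, ← Metric.mem_ball]
    have hz1 : ‖u‖ - ε/2 ≤ ‖q.1‖ := by
      have := norm_sub_norm_le u q.1
      rw [norm_sub_rev] at hzu
      linarith
    rw [div_le_iff₀ ht0]
    nlinarith [norm_nonneg (q.1 - u), ht0.le]

lemma norm_clarkeSubdiff_eq_one {u : Y} (hu : u ≠ 0) {p : Y →L[ℝ] ℝ}
    (hp : p ∈ clarkeSubdiff (fun w : Y => ‖w‖) u) : ‖p‖ = 1 := by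
  have hle : ‖p‖ ≤ 1 := by
    apply ContinuousLinearMap.opNorm_le_bound p zero_le_one
    intro w
    rw [one_mul, Real.norm_eq_abs, abs_le]
    constructor
    · have := (hp (-w)).trans (clarke_norm_le u (-w))
      rw [map_neg, norm_neg] at this
      linarith
    · exact (hp w).trans (clarke_norm_le u w)
  have hpu : ‖u‖ ≤ p u := by
    have := (hp (-u)).trans (clarke_norm_neg_self u)
    rw [map_neg] at this
    linarith
  have hge : 1 ≤ ‖p‖ := by
    have h1 : p u ≤ ‖p‖ * ‖u‖ := by
      calc p u ≤ ‖p u‖ := le_abs_self _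
        _ ≤ ‖p‖ * ‖u‖ := p.le_opNorm u
    have hupos : 0 < ‖u‖ := norm_pos_iff.mpr hu
    nlinarith
  linarith

end Clarke

/-- Ekeland's variational principle (weak form) for continuous nonnegative functions on a
complete metric space. -/
lemma ekeland {M : Type*} [MetricSpace M] [CompleteSpace M]
    {g : M → ℝ} (hg : Continuous g) (hg0 : ∀ z, 0 ≤ g z) {ε : ℝ} (hε : 0 < ε) (x₀ : M) :
    ∃ x : M, g x + ε * dist x x₀ ≤ g x₀ ∧ ∀ z : M, g x ≤ g z + ε * dist z x := by
  set F : M → Set M := fun x => {z | g z + ε * dist z x ≤ g x} with hF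
  have hFself : ∀ x, x ∈ F x := fun x => by simp [hF]
  have hFtrans : ∀ {x z}, z ∈ F x → F z ⊆ F x := by
    intro x z hz w hw
    simp only [hF, mem_setOf_eq] at *
    have := dist_triangle w z x
    nlinarith
  have hFclosed : ∀ x, IsClosed (F x) :=
    fun x => isClosed_le (hg.add (continuous_const.mul (continuous_id.dist continuous_const)))
      continuous_const
  have hbdd : ∀ x, BddBelow (g '' F x) := fun x => ⟨0, by rintro _ ⟨z, _, rfl⟩; exact hg0 z⟩
  have hstep : ∀ (x : M) (n : ℕ), ∃ z, z ∈ F x ∧ g z < sInf (g '' F x) + (1/2)^n := by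
    intro x n
    have hlt : sInf (g '' F x) < sInf (g '' F x) + (1/2)^n :=
      lt_add_of_pos_right _ (by positivity)
    obtain ⟨_, ⟨z, hz, rfl⟩, hlt'⟩ :=
      exists_lt_of_csInf_lt (Set.Nonempty.image g ⟨x, hFself x⟩) hlt
    exact ⟨z, hz, hlt'⟩
  choose step hstep1 hstep2 using hstep
  set seq : ℕ → M := fun n => Nat.rec x₀ (fun n xn => step xn n) n with hseq
  have hseq0 : seq 0 = x₀ := rfl
  have hseqS : ∀ n, seq (n+1) = step (seq n) n := fun n => rfl
  have hmem : ∀ n, seq (n+1) ∈ F (seq n) := fun n => hstep1 (seq n) n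
  have hchain : ∀ n m, n ≤ m → seq m ∈ F (seq n) := by
    intro n m hnm
    induction m, hnm using Nat.le_induction with
    | base => exact hFself _
    | succ m hnm ih => exact hFtrans ih (hmem m)
  set a : ℕ → ℝ := fun n => g (seq n) with ha
  have hdista : ∀ {z x}, z ∈ F x → ε * dist z x ≤ g x - g z := by
    intro z x hz; simp only [hF, mem_setOf_eq] at hz; linarith
  have hanti : Antitone a := by
    intro n m hnm
    have := hdista (hchain n m hnm)
    have := dist_nonneg (x := seq m) (y := seq n)
    simp only [ha]
    nlinarith
  have hbddb : BddBelow (range a) := ⟨0, by rintro _ ⟨n, rfl⟩; exact hg0 _⟩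
  set L : ℝ := ⨅ n, a n with hL
  have htendsto : Tendsto a atTop (𝓝 L) := tendsto_atTop_ciInf hanti hbddb
  have hLle : ∀ n, L ≤ a n := fun n => ciInf_le hbddb n
  have hcauchy : CauchySeq seq := by
    apply cauchySeq_of_le_tendsto_0 (fun N => (a N - L) / ε)
    · intro n m N hn hm
      rcases le_total n m with h | h
      · rw [dist_comm]
        have h1 := hdista (hchain n m h)
        have h2 : a N ≥ a n := hanti hn
        have h3 : L ≤ a m := hLle m
        rw [le_div_iff₀ hε]
        simp only [ha] at *
        nlinarith
      · have h1 := hdista (hchain m n h)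
        have h2 : a N ≥ a m := hanti hm
        have h3 : L ≤ a n := hLle n
        rw [le_div_iff₀ hε]
        simp only [ha] at *
        nlinarith
    · have : Tendsto (fun N => (a N - L) / ε) atTop (𝓝 ((L - L) / ε)) :=
        (htendsto.sub tendsto_const_nhds).div_const ε
      simpa using this
  obtain ⟨xb, hxb⟩ := cauchySeq_tendsto_of_complete hcauchy
  have hxbF : ∀ n, xb ∈ F (seq n) := by
    intro n
    exact (hFclosed (seq n)).mem_of_tendsto hxb
      (eventually_atTop.2 ⟨n, fun m hm => hchain n m hm⟩)
  have hgxb : Tendsto a atTop (𝓝 (g xb)) := (hg.continuousAt.tendsto).comp hxb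
  have hLxb : L = g xb := tendsto_nhds_unique htendsto hgxb
  refine ⟨xb, ?_, ?_⟩
  · have := hxbF 0
    rw [hseq0] at this
    simpa [hF] using this
  · intro z
    by_cases hz : z ∈ F xb
    · have hzn : ∀ n, z ∈ F (seq n) := fun n => hFtrans (hxbF n) hz
      have hkey : ∀ n, a (n+1) ≤ g z + (1/2)^n := by
        intro n
        have h1 : sInf (g '' F (seq n)) ≤ g z := csInf_le (hbdd _) (mem_image_of_mem g (hzn n))
        have h2 := hstep2 (seq n) n
        rw [← hseqS n] at h2
        simp only [ha]
        linarith
      have hlim1 : Tendsto (fun n => a (n+1)) atTop (𝓝 L) :=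
        htendsto.comp (tendsto_add_atTop_nat 1)
      have hlim2 : Tendsto (fun n : ℕ => g z + (1/2:ℝ)^n) atTop (𝓝 (g z + 0)) :=
        tendsto_const_nhds.add
          (tendsto_pow_atTop_nhds_zero_of_lt_one (by norm_num) (by norm_num))
      have hLz : L ≤ g z + 0 := le_of_tendsto_of_tendsto' hlim1 hlim2 hkey
      have hd : 0 ≤ ε * dist z xb := by positivity
      rw [hLxb] at hLz
      linarith
    · simp only [hF, mem_setOf_eq, not_le] at hz
      linarith

section WeakDualAux

variable {X : Type*} [NormedAddCommGroup X] [NormedSpace ℝ X]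

instance : ContinuousSMul ℝ (WeakDual ℝ X) :=
  WeakBilin.instContinuousSMul (B := topDualPairing ℝ X)

instance : LocallyConvexSpace ℝ (WeakDual ℝ X) :=
  WeakBilin.locallyConvexSpace (B := topDualPairing ℝ X)

open NormedSpace

/-- evaluation at a point as a linear map on the weak dual -/
def evalLM (x : X) : WeakDual ℝ X →ₗ[ℝ] ℝ where
  toFun S := S x
  map_add' _ _ := rfl
  map_smul' _ _ := rfl

lemma weakdual_functional_is_eval (ℓ : WeakDual ℝ X →L[ℝ] ℝ) :
    ∃ v : X, ∀ S : WeakDual ℝ X, ℓ S = S v := by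
  haveI : Nonempty X := ⟨0⟩
  set q : Seminorm ℝ (WeakDual ℝ X) := (normSeminorm ℝ ℝ).comp ℓ.toLinearMap with hq
  have hqc : Continuous q := by
    show Continuous fun x : WeakDual ℝ X => ‖ℓ x‖
    exact ℓ.continuous.norm
  obtain ⟨s, C, hC, hle⟩ :=
    Seminorm.bound_of_continuous (LinearMap.weakBilin_withSeminorms (topDualPairing ℝ X)) q hqc
  have hker : ∀ S : WeakDual ℝ X, (∀ i ∈ s, S i = 0) → ℓ S = 0 := by
    intro S hS
    have h1 : q S ≤ C • (s.sup (topDualPairing ℝ X).toSeminormFamily) S := hle S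
    have h2 : (s.sup (topDualPairing ℝ X).toSeminormFamily) S ≤ 0 := by
      apply Seminorm.finset_sup_apply_le le_rfl
      intro i hi
      change ‖S i‖ ≤ 0
      rw [hS i hi, norm_zero]
    have h3 : q S = ‖ℓ S‖ := rfl
    have h4 : 0 ≤ (s.sup (topDualPairing ℝ X).toSeminormFamily) S := apply_nonneg _ _
    have h5 : (s.sup (topDualPairing ℝ X).toSeminormFamily) S = 0 := le_antisymm h2 h4
    simp only [Seminorm.smul_apply, h5, smul_zero] at h1
    have : ‖ℓ S‖ ≤ 0 := by rw [← h3]; exact h1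
    simpa using this
  have hspan : ℓ.toLinearMap ∈ Submodule.span ℝ (Set.range fun i : s => evalLM (i : X)) := by
    apply mem_span_of_iInf_ker_le_ker
    intro S hS
    simp only [Submodule.mem_iInf, LinearMap.mem_ker] at hS
    simp only [LinearMap.mem_ker, ContinuousLinearMap.coe_coe]
    exact hker S (fun i hi => hS ⟨i, hi⟩)
  obtain ⟨c, hc⟩ := (Submodule.mem_span_range_iff_exists_fun ℝ).1 hspan
  refine ⟨∑ i : s, c i • (i : X), fun S => ?_⟩
  have := congrArg (fun K : WeakDual ℝ X →ₗ[ℝ] ℝ => K S) hc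
  simp only [LinearMap.coe_sum, Finset.sum_apply, LinearMap.smul_apply,
    ContinuousLinearMap.coe_coe] at this
  rw [← this]
  rw [map_sum]
  congr 1
  ext i
  rw [map_smul]
  rfl

open NormedSpace in
lemma exists_descent_dir {A : Set (X →L[ℝ] ℝ)} (hne : A.Nonempty) (hconv : Convex ℝ A)
    (hcl : IsClosed ((StrongDual.toWeakDual : (X →L[ℝ] ℝ) → WeakDual ℝ X) '' A))
    {α β : ℝ} (hβ : 0 < β) (hβα : β < α)
    (hnorm : ∀ S ∈ A, α ≤ ‖S‖) : ∃ v : X, ‖v‖ ≤ 1 ∧ ∀ S ∈ A, S v ≤ -β := by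
  classical
  set K : Set (WeakDual ℝ X) := WeakDual.toStrongDual ⁻¹' Metric.closedBall 0 β with hK
  have hKcompact : IsCompact K := WeakDual.isCompact_closedBall (𝕜 := ℝ) 0 β
  have hKconvex : Convex ℝ K :=
    (convex_closedBall (0 : StrongDual ℝ X) β).linear_preimage
      (WeakDual.toStrongDual : WeakDual ℝ X ≃ₗ[ℝ] StrongDual ℝ X).toLinearMap
  set A' : Set (WeakDual ℝ X) :=
    (StrongDual.toWeakDual : (X →L[ℝ] ℝ) → WeakDual ℝ X) '' A with hA'
  have hA'conv : Convex ℝ A' :=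
    hconv.linear_image (StrongDual.toWeakDual : StrongDual ℝ X ≃ₗ[ℝ] WeakDual ℝ X).toLinearMap
  have hdisj : Disjoint K A' := by
    rw [Set.disjoint_left]
    rintro S hS ⟨T, hT, rfl⟩
    have h1 : ‖T‖ ≤ β := by
      have : StrongDual.toWeakDual T ∈ WeakDual.toStrongDual ⁻¹' Metric.closedBall 0 β := hS
      rw [Set.mem_preimage, mem_closedBall_zero_iff] at this
      exact this
    have h2 := hnorm T hT
    linarith
  obtain ⟨ℓ, u, v', hKlt, huv, hA'gt⟩ :=
    geometric_hahn_banach_compact_closed hKconvex hKcompact hA'conv hcl hdisj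
  obtain ⟨v₀, hv₀⟩ := weakdual_functional_is_eval ℓ
  obtain ⟨S₀, hS₀⟩ := hne
  have h0K : (0 : WeakDual ℝ X) ∈ K := by
    simp [hK, mem_closedBall_zero_iff]
    positivity
  have hu0 : (0:ℝ) < u := by
    have := hKlt 0 h0K
    simpa using this
  have hS₀v : v' < S₀ v₀ := by
    have := hA'gt _ ⟨S₀, hS₀, rfl⟩
    rwa [hv₀] at this
  have hv₀ne : v₀ ≠ 0 := by
    rintro rfl
    simp only [map_zero] at hS₀v
    linarith
  obtain ⟨g, hg1, hgv⟩ := exists_dual_vector ℝ v₀ (norm_ne_zero_iff.mpr hv₀ne)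
  have hβg : (β • g : StrongDual ℝ X) ∈ Metric.closedBall (0 : StrongDual ℝ X) β := by
    rw [mem_closedBall_zero_iff]
    have : ‖(β • g : X →L[ℝ] ℝ)‖ = ‖β‖ * ‖g‖ := norm_smul β g
    rw [this, Real.norm_of_nonneg hβ.le, hg1, mul_one]
  have hβgK : (StrongDual.toWeakDual (β • g)) ∈ K := hβg
  have hβv₀ : β * ‖v₀‖ < u := by
    have := hKlt _ hβgK
    rw [hv₀] at this
    have heval : (β • g) v₀ = β * ‖v₀‖ := by
      rw [ContinuousLinearMap.smul_apply, hgv]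
      norm_num
    rw [show (StrongDual.toWeakDual (β • g) : X →L[ℝ] ℝ) v₀ = (β • g) v₀ from rfl, heval] at this
    exact this
  have hnv₀ : (0:ℝ) < ‖v₀‖ := norm_pos_iff.mpr hv₀ne
  refine ⟨-(‖v₀‖⁻¹ • v₀), ?_, ?_⟩
  · rw [norm_neg, norm_smul, Real.norm_of_nonneg (by positivity)]
    rw [inv_mul_cancel₀ hnv₀.ne']
  · intro S hS
    have hSv : u < S v₀ := by
      have := hA'gt _ ⟨S, hS, rfl⟩
      rw [hv₀] at this
      have h2 : v' < S v₀ := this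
      linarith
    have hβlt : β * ‖v₀‖ < S v₀ := lt_trans hβv₀ hSv
    rw [map_neg, map_smul]
    have : β < ‖v₀‖⁻¹ * S v₀ := by
      rw [lt_inv_mul_iff₀ hnv₀]
      linarith [hβlt]
    simp only [smul_eq_mul]
    linarith

end WeakDualAux

section Descent

variable {X Y : Type*} [NormedAddCommGroup X] [NormedSpace ℝ X]
    [NormedAddCommGroup Y] [NormedSpace ℝ Y]

lemma descent_lemma {U : Set X} {f : X → Y} {Jf : X → Set (X →L[ℝ] Y)}
    (hcrc : ChainRuleCond f Jf U) {α : ℝ}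
    (hα : ∀ x ∈ U, ∀ T ∈ convexHull ℝ (Jf x), α ≤ nuIndex T)
    {x : X} (hx : x ∈ U) {y : Y} (hy : y ≠ f x) {β : ℝ} (hβ : 0 < β) (hβα : β < α) :
    ∃ v : X, ‖v‖ ≤ 1 ∧ diniUpper (fun z => ‖f z - y‖) x v ≤ -β := by
  obtain ⟨hclosed, hconv, hPJ⟩ := hcrc x hx y hy
  have hne := hPJ.1
  have hnorm : ∀ S ∈ pjComp f Jf x y, α ≤ ‖S‖ := by
    rintro S ⟨p, hp, T, hT, rfl⟩
    have hu : f x - y ≠ 0 := sub_ne_zero.mpr (Ne.symm hy)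
    have hp1 : ‖p‖ = 1 := norm_clarkeSubdiff_eq_one hu hp
    have h1 : α ≤ nuIndex T := hα x hx T hT
    have h2 : nuIndex T ≤ ‖p.comp T‖ :=
      csInf_le ⟨0, by rintro c ⟨p', _, rfl⟩; positivity⟩ ⟨p, hp1, rfl⟩
    linarith
  obtain ⟨v, hv1, hv2⟩ := exists_descent_dir hne hconv hclosed hβ hβα hnorm
  refine ⟨v, hv1, ?_⟩
  have hd := hPJ.2 (ContinuousLinearMap.id ℝ ℝ) v
  simp only [ContinuousLinearMap.coe_id', id_eq, ContinuousLinearMap.id_apply] at hd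
  refine hd.trans ?_
  apply csSup_le (hne.image _)
  rintro _ ⟨S, hS, rfl⟩
  exact hv2 S hS

end Descent

end Aux

/-- Open mapping theorem: if `Jf` is a pseudo-Jacobian mapping for `f` on `U`
satisfying the chain rule condition, and `α > 0` is a lower bound for the surjectivity
indices of all operators in `co (Jf x)`, `x ∈ U`, then `B(f x₀, δ α) ⊆ f (B(x₀, δ))`
for every ball `B(x₀, δ) ⊆ U`; consequently `f(U)` is open and `f` is an open map. -/
theorem open_mapping_pseudoJacobian
    {X Y : Type*} [NormedAddCommGroup X] [NormedSpace ℝ X] [CompleteSpace X]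
    [NormedAddCommGroup Y] [NormedSpace ℝ Y] [CompleteSpace Y]
    {U : Set X} (hUopen : IsOpen U)
    {f : X → Y} (hf : ContinuousOn f U)
    {Jf : X → Set (X →L[ℝ] Y)} (hJf : ∀ x ∈ U, IsPseudoJacobianAt f (Jf x) x)
    (hcrc : ChainRuleCond f Jf U)
    {α : ℝ} (hαpos : 0 < α)
    (hα : ∀ x ∈ U, ∀ T ∈ convexHull ℝ (Jf x), α ≤ nuIndex T) :
    (∀ (x₀ : X) (δ : ℝ), 0 < δ → Metric.ball x₀ δ ⊆ U →
        Metric.ball (f x₀) (δ * α) ⊆ f '' Metric.ball x₀ δ) ∧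
      IsOpen (f '' U) ∧
      ∀ W : Set X, W ⊆ U → IsOpen W → IsOpen (f '' W) := by
  have key : ∀ (x₀ : X) (δ : ℝ), 0 < δ → Metric.ball x₀ δ ⊆ U →
      Metric.ball (f x₀) (δ * α) ⊆ f '' Metric.ball x₀ δ := by
    intro x₀ δ hδ hball y hy
    by_cases hy0 : y = f x₀
    · exact ⟨x₀, mem_ball_self hδ, hy0.symm⟩
    set r := ‖f x₀ - y‖ with hr
    have hr0 : 0 < r := norm_pos_iff.mpr (sub_ne_zero.mpr (Ne.symm hy0))
    have hrδα : r < δ * α := by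
      rw [mem_ball, dist_comm] at hy
      rwa [hr, ← dist_eq_norm]
    set δ' := (r / α + δ) / 2 with hδ'
    have hrα : r / α < δ := (div_lt_iff₀ hαpos).mpr (by linarith)
    have hδ'1 : r / α < δ' := by
      rw [hδ']
      have : 0 < r / α := by positivity
      linarith
    have hδ'2 : δ' < δ := by rw [hδ']; linarith
    have hδ'0 : 0 < δ' := by
      have : 0 < r / α := by positivity
      linarith
    have hrδ' : r / δ' < α := by
      rw [div_lt_iff₀ hδ'0]
      calc r < δ' * α := (div_lt_iff₀ hαpos).mp hδ'1
        _ = α * δ' := mul_comm _ _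
    set σ := (r / δ' + α) / 2 with hσ
    have hσ1 : r / δ' < σ := by rw [hσ]; linarith
    have hσα : σ < α := by rw [hσ]; linarith
    have hσ0 : 0 < σ := by
      have : 0 ≤ r / δ' := by positivity
      rw [hσ]; linarith
    set β := (σ + α) / 2 with hβ
    have hβσ : σ < β := by rw [hβ]; linarith
    have hβα : β < α := by rw [hβ]; linarith
    have hβ0 : 0 < β := by rw [hβ]; linarith
    have hsubU : Metric.closedBall x₀ δ' ⊆ Metric.ball x₀ δ :=
      Metric.closedBall_subset_ball hδ'2
    have hsubU' : Metric.closedBall x₀ δ' ⊆ U := hsubU.trans hball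
    haveI : CompleteSpace (Metric.closedBall x₀ δ') :=
      Metric.isClosed_closedBall.completeSpace_coe
    set g : X → ℝ := fun z => ‖f z - y‖ with hgdef
    set G : (Metric.closedBall x₀ δ') → ℝ := fun z => g ↑z with hGdef
    have hfc : Continuous fun z : (Metric.closedBall x₀ δ') => f ↑z :=
      (hf.mono hsubU').restrict
    have hGc : Continuous G := (hfc.sub continuous_const).norm
    have hG0 : ∀ z, 0 ≤ G z := fun z => norm_nonneg _
    obtain ⟨xb, h1, h2⟩ := ekeland hGc hG0 hσ0 ⟨x₀, Metric.mem_closedBall_self hδ'0.le⟩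
    have hGxb : 0 ≤ G xb := hG0 xb
    have hdxb : dist (xb : X) x₀ < δ' := by
      have hdist : dist xb (⟨x₀, Metric.mem_closedBall_self hδ'0.le⟩ :
          (Metric.closedBall x₀ δ')) = dist (xb : X) x₀ := Subtype.dist_eq _ _
      rw [hdist] at h1
      have hGx₀ : G ⟨x₀, Metric.mem_closedBall_self hδ'0.le⟩ = r := rfl
      rw [hGx₀] at h1
      have hd1 : σ * dist (xb : X) x₀ ≤ r := by linarith
      by_contra hcon
      push_neg at hcon
      have : σ * δ' ≤ σ * dist (xb : X) x₀ := by
        apply mul_le_mul_of_nonneg_left hcon hσ0.le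
      have hrσδ' : r < σ * δ' := by
        rw [div_lt_iff₀ hδ'0] at hσ1
        linarith
      linarith
    have hxbU : (xb : X) ∈ U := hsubU' xb.2
    have hfxb : f ↑xb = y := by
      by_contra hne
      obtain ⟨v, hv1, hv2⟩ :=
        descent_lemma hcrc hα hxbU (fun h => hne h.symm) hβ0 hβα
      have hlow : -σ ≤ diniUpper (fun z => ‖f z - y‖) ↑xb v := by
        apply diniUpper_ge (by linarith)
        have ht₀ : (0:ℝ) < δ' - dist (xb : X) x₀ := by linarith
        filter_upwards [Ioo_mem_nhdsGT_of_mem (Set.left_mem_Ico.mpr ht₀)] with t ht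
        have hdistt : dist ((xb : X) + t • v) (xb : X) = t * ‖v‖ := by
          rw [dist_eq_norm, add_sub_cancel_left, norm_smul, Real.norm_of_nonneg ht.1.le]
        have hmem : ((xb : X) + t • v) ∈ Metric.closedBall x₀ δ' := by
          rw [Metric.mem_closedBall]
          have htri := dist_triangle ((xb : X) + t • v) (xb : X) x₀
          have hv' : t * ‖v‖ ≤ t := by
            calc t * ‖v‖ ≤ t * 1 := mul_le_mul_of_nonneg_left hv1 ht.1.le
              _ = t := mul_one t
          have ht2 := ht.2
          rw [hdistt] at htri
          linarith
        have hEke := h2 ⟨_, hmem⟩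
        have hdist2 : dist (⟨(xb : X) + t • v, hmem⟩ : (Metric.closedBall x₀ δ')) xb
            = dist ((xb : X) + t • v) (xb : X) := Subtype.dist_eq _ _
        rw [hdist2, hdistt] at hEke
        have hv' : t * ‖v‖ ≤ t := by
          calc t * ‖v‖ ≤ t * 1 := mul_le_mul_of_nonneg_left hv1 ht.1.le
            _ = t := mul_one t
        have hEke' : g ↑xb ≤ g ((xb : X) + t • v) + σ * t := by
          have hσv : σ * (t * ‖v‖) ≤ σ * t := mul_le_mul_of_nonneg_left hv' hσ0.le
          exact hEke.trans (by linarith)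
        rw [le_div_iff₀ ht.1]
        simp only [hgdef] at hEke'
        linarith
      linarith
    exact ⟨↑xb, hsubU (Metric.mem_closedBall.mpr hdxb.le), hfxb⟩
  refine ⟨key, ?_, ?_⟩
  · rw [Metric.isOpen_iff]
    rintro _ ⟨x, hx, rfl⟩
    obtain ⟨δ, hδ0, hδU⟩ := Metric.isOpen_iff.mp hUopen x hx
    exact ⟨δ * α, by positivity,
      (key x δ hδ0 hδU).trans (Set.image_mono (f := f) hδU)⟩
  · intro W hWU hWopen
    rw [Metric.isOpen_iff]
    rintro _ ⟨x, hx, rfl⟩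
    obtain ⟨δ, hδ0, hδW⟩ := Metric.isOpen_iff.mp hWopen x hx
    exact ⟨δ * α, by positivity,
      (key x δ hδ0 (hδW.trans hWU)).trans (Set.image_mono (f := f) hδW)⟩

end
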